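/- Let a point X be uniformly distributed on a disk of radius r_d centered at (0,0,h) in the plane z = h, with h > 0, and let the reference point be v₀ = (v₀, 0, 0) with 0 ≤ v₀ ≤ r_d. Then the distance Z = ‖X − v₀‖ has probability density f_Z(z) = 2z/r_d² for z_l ≤ z ≤ z_m and f_Z(z) = (2z/(π r_d²)) arccos((z² + v₀² − r_d² − h²)/(2 v₀ √(z² − h²))) for z_m ≤ z ≤ z_p, where z_l = h, z_m = √((r_d − v₀)² + h²), and z_p = √((r_d + v₀)² + h²). -/

import Mathlib

open MeasureTheory Real Set
open scoped ENNReal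
set_option maxHeartbeats 4000000

-- lintegral polar coordinates
theorem lintegral_polar (g : ℝ × ℝ → ℝ≥0∞) :
    ∫⁻ p, g p = ∫⁻ p in polarCoord.target, ENNReal.ofReal p.1 * g (polarCoord.symm p) := by
  set B : ℝ × ℝ → ℝ × ℝ →L[ℝ] ℝ × ℝ := fun p =>
    LinearMap.toContinuousLinearMap (Matrix.toLin (Module.Basis.finTwoProd ℝ) (Module.Basis.finTwoProd ℝ)
      !![Real.cos p.2, -p.1 * Real.sin p.2; Real.sin p.2, p.1 * Real.cos p.2])
  have A : ∀ p ∈ polarCoord.target, HasFDerivWithinAt polarCoord.symm (B p) polarCoord.target p :=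
    fun p _ => (hasFDerivAt_polarCoord_symm p).hasFDerivWithinAt
  have B_det : ∀ p, (B p).det = p.1 := by
    intro p
    conv_rhs => rw [← one_mul p.1, ← Real.cos_sq_add_sin_sq p.2]
    simp only [B, neg_mul, LinearMap.det_toContinuousLinearMap, LinearMap.det_toLin,
      Matrix.det_fin_two_of, sub_neg_eq_add]
    ring
  calc
    ∫⁻ p, g p = ∫⁻ p in polarCoord.source, g p := by
      rw [← setLIntegral_univ]
      exact (setLIntegral_congr polarCoord_source_ae_eq_univ.symm)
    _ = ∫⁻ p in polarCoord.symm '' polarCoord.target, g p := by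
      rw [polarCoord.symm_image_target_eq_source]
    _ = ∫⁻ p in polarCoord.target, ENNReal.ofReal |(B p).det| * g (polarCoord.symm p) := by
      exact lintegral_image_eq_lintegral_abs_det_fderiv_mul volume
        polarCoord.open_target.measurableSet A polarCoord.symm.injOn g
    _ = ∫⁻ p in polarCoord.target, ENNReal.ofReal p.1 * g (polarCoord.symm p) := by
      refine setLIntegral_congr_fun polarCoord.open_target.measurableSet (?_)
      intro x hx
      dsimp only
      rw [B_det, abs_of_pos hx.1]

theorem arccos_antitone : Antitone Real.arccos := fun x y h =>
  sub_le_sub_left (Real.monotone_arcsin h) _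

theorem arc_measure (c : ℝ) :
    volume {θ : ℝ | θ ∈ Ioo (-π) π ∧ Real.cos θ ≤ c} =
      ENNReal.ofReal (2 * (π - Real.arccos c)) := by
  set a := Real.arccos c with ha
  have ha0 : 0 ≤ a := Real.arccos_nonneg c
  have hapi : a ≤ π := Real.arccos_le_pi c
  have hpi : (0:ℝ) < π := Real.pi_pos
  have hca : -1 ≤ c → Real.cos a ≤ c := by
    intro h1
    rcases le_or_gt c 1 with h|h
    · rw [ha, Real.cos_arccos h1 h]
    · exact (Real.cos_le_one a).trans h.le
  have hT_sub : Ioo (-π) (-a) ∪ Ioo a π ⊆ {θ : ℝ | θ ∈ Ioo (-π) π ∧ Real.cos θ ≤ c} := by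
    rintro θ (hθ | hθ)
    · rcases le_or_gt (-1) c with h1 | h1
      · refine ⟨⟨hθ.1, by linarith [hθ.2]⟩, ?_⟩
        rw [← Real.cos_neg]
        have : Real.cos (-θ) < Real.cos a :=
          Real.strictAntiOn_cos ⟨ha0, hapi⟩ ⟨by linarith [hθ.2], by linarith [hθ.1]⟩
            (by linarith [hθ.2])
        linarith [hca h1]
      · have : a = π := Real.arccos_eq_pi.mpr h1.le
        exact absurd (hθ.1.trans hθ.2) (by rw [this]; simp)
    · rcases le_or_gt (-1) c with h1 | h1
      · refine ⟨⟨by linarith [hθ.1], hθ.2⟩, ?_⟩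
        have : Real.cos θ < Real.cos a :=
          Real.strictAntiOn_cos ⟨ha0, hapi⟩ ⟨by linarith [hθ.1], hθ.2.le⟩ hθ.1
        linarith [hca h1]
      · have : a = π := Real.arccos_eq_pi.mpr h1.le
        exact absurd (hθ.1.trans hθ.2) (by rw [this]; simp)
  have hS_sub : {θ : ℝ | θ ∈ Ioo (-π) π ∧ Real.cos θ ≤ c} ⊆
      (Ioo (-π) (-a) ∪ Ioo a π) ∪ {-a, a} := by
    rintro θ ⟨⟨h1, h2⟩, hc⟩
    rcases le_or_gt 0 θ with h0 | h0
    · have haθ : a ≤ θ := by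
        have := arccos_antitone hc
        rwa [Real.arccos_cos h0 h2.le] at this
      rcases eq_or_lt_of_le haθ with h | h
      · exact Or.inr (Or.inr h.symm)
      · exact Or.inl (Or.inr ⟨h, h2⟩)
    · have haθ : a ≤ -θ := by
        have hc' : Real.cos (-θ) ≤ c := by rwa [Real.cos_neg]
        have := arccos_antitone hc'
        rwa [Real.arccos_cos (by linarith) (by linarith)] at this
      rcases eq_or_lt_of_le haθ with h | h
      · exact Or.inr (Or.inl (by linarith [h]))
      · exact Or.inl (Or.inl ⟨h1, by linarith⟩)
  have hdisj : Disjoint (Ioo (-π) (-a)) (Ioo a π) := by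
    rw [Set.disjoint_left]
    intro x hx hx'
    linarith [hx.2, hx'.1]
  have hT_vol : volume (Ioo (-π) (-a) ∪ Ioo a π) = ENNReal.ofReal (2 * (π - a)) := by
    rw [measure_union hdisj measurableSet_Ioo, Real.volume_Ioo, Real.volume_Ioo,
      ← ENNReal.ofReal_add (by linarith) (by linarith)]
    ring_nf
  apply le_antisymm
  · calc volume {θ : ℝ | θ ∈ Ioo (-π) π ∧ Real.cos θ ≤ c}
        ≤ volume ((Ioo (-π) (-a) ∪ Ioo a π) ∪ {-a, a}) := measure_mono hS_sub
      _ ≤ volume (Ioo (-π) (-a) ∪ Ioo a π) + volume ({-a, a} : Set ℝ) := measure_union_le _ _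
      _ = ENNReal.ofReal (2 * (π - a)) := by
          have : volume ({-a, a} : Set ℝ) = 0 := by
            refine le_antisymm ?_ zero_le
            calc volume ({-a, a} : Set ℝ) ≤ volume ({-a} : Set ℝ) + volume ({a} : Set ℝ) := by
                  rw [Set.insert_eq]; exact measure_union_le _ _
              _ = 0 := by rw [Real.volume_singleton, Real.volume_singleton, add_zero]
          rw [hT_vol, this, add_zero]
  · rw [← hT_vol]
    exact measure_mono hT_sub

theorem disk_vol (x : EuclideanSpace ℝ (Fin 2)) (r : ℝ) (hr : 0 ≤ r) :
    volume (Metric.closedBall x r) = ENNReal.ofReal (π * r ^ 2) := by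
  rw [EuclideanSpace.volume_closedBall]
  have hcard : Fintype.card (Fin 2) = 2 := by simp
  rw [hcard]
  have h2 : ((2 : ℕ) : ℝ) / 2 + 1 = 2 := by norm_num
  rw [h2, Real.Gamma_two]
  have : Real.sqrt π ^ 2 = π := Real.sq_sqrt Real.pi_pos.le
  rw [this]
  rw [← ENNReal.ofReal_pow hr, ← ENNReal.ofReal_mul (by positivity)]
  congr 1
  ring

theorem subst_sqrt (h t' : ℝ) (hh : 0 < h) (ht' : 0 ≤ t') (g : ℝ → ℝ≥0∞) :
    ∫⁻ z in Ioc h (Real.sqrt (t' ^ 2 + h ^ 2)), g z =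
      ∫⁻ s in Ioc (0 : ℝ) t',
        ENNReal.ofReal (s / Real.sqrt (s ^ 2 + h ^ 2)) * g (Real.sqrt (s ^ 2 + h ^ 2)) := by
  have hf' : ∀ s ∈ Ioc (0 : ℝ) t', HasDerivWithinAt (fun s => Real.sqrt (s ^ 2 + h ^ 2))
      (s / Real.sqrt (s ^ 2 + h ^ 2)) (Ioc (0 : ℝ) t') s := by
    intro s _
    have hpos : (0 : ℝ) < s ^ 2 + h ^ 2 := by positivity
    have h1 : HasDerivAt (fun s : ℝ => s ^ 2 + h ^ 2) (2 * s) s := by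
      simpa [mul_comm] using (hasDerivAt_pow 2 s).add_const (h ^ 2)
    have h2 := (Real.hasDerivAt_sqrt hpos.ne').comp s h1
    have : 1 / (2 * Real.sqrt (s ^ 2 + h ^ 2)) * (2 * s) = s / Real.sqrt (s ^ 2 + h ^ 2) := by
      have : Real.sqrt (s ^ 2 + h ^ 2) > 0 := Real.sqrt_pos.mpr hpos
      field_simp
    rw [this] at h2
    exact h2.hasDerivWithinAt
  have hinj : Set.InjOn (fun s => Real.sqrt (s ^ 2 + h ^ 2)) (Ioc (0 : ℝ) t') := by
    intro x hx y hy hxy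
    have e : Real.sqrt (x ^ 2 + h ^ 2) = Real.sqrt (y ^ 2 + h ^ 2) := hxy
    have hx2 : x ^ 2 + h ^ 2 = y ^ 2 + h ^ 2 := by
      have h1 : (0:ℝ) ≤ x ^ 2 + h ^ 2 := by positivity
      have h2 : (0:ℝ) ≤ y ^ 2 + h ^ 2 := by positivity
      rw [← Real.sq_sqrt h1, ← Real.sq_sqrt h2, e]
    nlinarith [hx.1, hy.1]
  have himg : (fun s => Real.sqrt (s ^ 2 + h ^ 2)) '' Ioc (0 : ℝ) t' =
      Ioc h (Real.sqrt (t' ^ 2 + h ^ 2)) := by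
    apply Set.eq_of_subset_of_subset
    · rintro z ⟨s, hs, rfl⟩
      constructor
      · have : h ^ 2 < s ^ 2 + h ^ 2 := by nlinarith [hs.1]
        calc h = Real.sqrt (h ^ 2) := (Real.sqrt_sq hh.le).symm
          _ < Real.sqrt (s ^ 2 + h ^ 2) := Real.sqrt_lt_sqrt (by positivity) this
      · apply Real.sqrt_le_sqrt
        nlinarith [hs.2, hs.1]
    · rintro z ⟨hz1, hz2⟩
      refine ⟨Real.sqrt (z ^ 2 - h ^ 2), ⟨?_, ?_⟩, ?_⟩
      · apply Real.sqrt_pos.mpr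
        nlinarith [hh]
      · rw [show t' = Real.sqrt (t' ^ 2) from (Real.sqrt_sq ht').symm]
        apply Real.sqrt_le_sqrt
        have : z ^ 2 ≤ t' ^ 2 + h ^ 2 := by
          nlinarith [Real.sq_sqrt (show (0:ℝ) ≤ t' ^ 2 + h ^ 2 by positivity), hz2,
            Real.sqrt_nonneg (t' ^ 2 + h ^ 2), hz1, hh]
        linarith
      · show Real.sqrt (Real.sqrt (z ^ 2 - h ^ 2) ^ 2 + h ^ 2) = z
        rw [Real.sq_sqrt (by nlinarith [hh] : (0:ℝ) ≤ z ^ 2 - h ^ 2)]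
        rw [show z ^ 2 - h ^ 2 + h ^ 2 = z ^ 2 by ring, Real.sqrt_sq (by linarith [hh] : (0:ℝ) ≤ z)]
  rw [← himg]
  have := lintegral_image_eq_lintegral_abs_det_fderiv_mul volume measurableSet_Ioc
    (fun s hs => (hf' s hs).hasFDerivWithinAt) hinj g
  rw [this]
  apply setLIntegral_congr_fun measurableSet_Ioc (?_)
  intro s hs
  dsimp only
  congr 2
  rw [ContinuousLinearMap.det_toSpanSingleton]
  rw [abs_of_nonneg (div_nonneg hs.1.le (Real.sqrt_nonneg _))]

theorem ball_inter_vol (r v₀ t : ℝ) (ht : 0 ≤ t) (hr : 0 ≤ r) :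
    volume (Metric.closedBall (0 : EuclideanSpace ℝ (Fin 2)) r ∩
      Metric.closedBall (WithLp.toLp 2 (fun i : Fin 2 => if i = 0 then v₀ else 0)) t) =
    volume {p : ℝ × ℝ | p.1 ^ 2 + p.2 ^ 2 ≤ t ^ 2 ∧ (p.1 + v₀) ^ 2 + p.2 ^ 2 ≤ r ^ 2} := by
  set A : Set (ℝ × ℝ) :=
    {p | (p.1 - v₀) ^ 2 + p.2 ^ 2 ≤ t ^ 2 ∧ p.1 ^ 2 + p.2 ^ 2 ≤ r ^ 2} with hA_def
  have hA : MeasurableSet A :=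
    (measurableSet_le (by fun_prop : Measurable fun p : ℝ × ℝ => (p.1 - v₀) ^ 2 + p.2 ^ 2)
        measurable_const).inter
      (measurableSet_le (by fun_prop : Measurable fun p : ℝ × ℝ => p.1 ^ 2 + p.2 ^ 2)
        measurable_const)
  have hψ : MeasurePreserving
      ((MeasurableEquiv.finTwoArrow : (Fin 2 → ℝ) ≃ᵐ ℝ × ℝ) ∘
        (MeasurableEquiv.toLp 2 (Fin 2 → ℝ)).symm)
      (volume : Measure (EuclideanSpace ℝ (Fin 2))) (volume : Measure (ℝ × ℝ)) :=
    (volume_preserving_finTwoArrow ℝ).comp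
      (EuclideanSpace.volume_preserving_symm_measurableEquiv_toLp (Fin 2))
  have hpre : ((MeasurableEquiv.finTwoArrow : (Fin 2 → ℝ) ≃ᵐ ℝ × ℝ) ∘
      (MeasurableEquiv.toLp 2 (Fin 2 → ℝ)).symm) ⁻¹' A =
      Metric.closedBall (0 : EuclideanSpace ℝ (Fin 2)) r ∩
        Metric.closedBall (WithLp.toLp 2 (fun i : Fin 2 => if i = 0 then v₀ else 0)) t := by
    ext p
    simp only [Set.mem_preimage, Function.comp_apply, MeasurableEquiv.finTwoArrow_apply,
      hA_def, Set.mem_setOf_eq, Set.mem_inter_iff, Metric.mem_closedBall,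
      EuclideanSpace.dist_eq, Fin.sum_univ_two, Real.dist_eq, sq_abs, sub_zero]
    have hb : (MeasurableEquiv.toLp 2 (Fin 2 → ℝ)).symm p = (p : Fin 2 → ℝ) := rfl
    rw [hb]
    constructor
    · rintro ⟨h1, h2⟩
      constructor
      · rw [Real.sqrt_le_iff]
        refine ⟨hr, ?_⟩
        simpa using h2
      · rw [Real.sqrt_le_iff]
        refine ⟨ht, ?_⟩
        simpa using h1
    · rintro ⟨h1, h2⟩
      rw [Real.sqrt_le_iff] at h1 h2
      constructor
      · simpa using h2.2
      · simpa using h1.2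
  rw [← hpre, hψ.measure_preimage hA.nullMeasurableSet]
  have htrans : MeasurePreserving (fun p : ℝ × ℝ => p + (v₀, 0))
      (volume : Measure (ℝ × ℝ)) volume := measurePreserving_add_right volume (v₀, 0)
  rw [← htrans.measure_preimage hA.nullMeasurableSet]
  congr 1
  ext p
  simp only [Set.mem_preimage, hA_def, Set.mem_setOf_eq, Prod.fst_add, Prod.snd_add]
  constructor
  · rintro ⟨h1, h2⟩
    constructor
    · convert h1 using 2 <;> ring
    · convert h2 using 2 <;> ring
  · rintro ⟨h1, h2⟩
    constructor
    · convert h1 using 2 <;> ring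
    · convert h2 using 2 <;> ring

theorem lens_vol (r v₀ t : ℝ) (hv : 0 < v₀) (ht : 0 ≤ t) :
    volume {p : ℝ × ℝ | p.1 ^ 2 + p.2 ^ 2 ≤ t ^ 2 ∧ (p.1 + v₀) ^ 2 + p.2 ^ 2 ≤ r ^ 2} =
      ∫⁻ s in Ioc (0 : ℝ) t,
        ENNReal.ofReal (2 * s * Real.arccos ((s ^ 2 + v₀ ^ 2 - r ^ 2) / (2 * v₀ * s))) := by
  set S : Set (ℝ × ℝ) :=
    {p | p.1 ^ 2 + p.2 ^ 2 ≤ t ^ 2 ∧ (p.1 + v₀) ^ 2 + p.2 ^ 2 ≤ r ^ 2} with hS_def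
  have hS : MeasurableSet S :=
    (measurableSet_le (by fun_prop : Measurable fun p : ℝ × ℝ => p.1 ^ 2 + p.2 ^ 2)
        measurable_const).inter
      (measurableSet_le (by fun_prop : Measurable fun p : ℝ × ℝ => (p.1 + v₀) ^ 2 + p.2 ^ 2)
        measurable_const)
  have hm : ∀ p : ℝ × ℝ, polarCoord.symm p = (p.1 * Real.cos p.2, p.1 * Real.sin p.2) := by
    intro p; rw [polarCoord_symm_apply]
  have key : volume S = ∫⁻ p in polarCoord.target,
      ENNReal.ofReal p.1 * S.indicator (fun _ => (1 : ℝ≥0∞)) (polarCoord.symm p) := by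
    rw [← lintegral_polar, lintegral_indicator hS]
    simp [Measure.restrict_apply, hS]
  rw [key]
  have htarget : polarCoord.target = Ioi (0 : ℝ) ×ˢ Ioo (-π) π := polarCoord_target
  rw [htarget]
  -- rewrite with explicit symm formula
  have hmeas : Measurable fun p : ℝ × ℝ =>
      ENNReal.ofReal p.1 * S.indicator (fun _ => (1 : ℝ≥0∞)) (p.1 * Real.cos p.2, p.1 * Real.sin p.2) := by
    apply Measurable.mul
    · fun_prop
    · apply Measurable.indicator measurable_const
      exact hS.preimage (by fun_prop)
  have hrw : (volume : Measure (ℝ × ℝ)).restrict (Ioi (0:ℝ) ×ˢ Ioo (-π) π) =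
      ((volume : Measure ℝ).restrict (Ioi 0)).prod ((volume : Measure ℝ).restrict (Ioo (-π) π)) := by
    rw [Measure.volume_eq_prod, Measure.prod_restrict]
  calc
    ∫⁻ p in Ioi (0:ℝ) ×ˢ Ioo (-π) π,
        ENNReal.ofReal p.1 * S.indicator (fun _ => (1 : ℝ≥0∞)) (polarCoord.symm p)
      = ∫⁻ p in Ioi (0:ℝ) ×ˢ Ioo (-π) π,
        ENNReal.ofReal p.1 * S.indicator (fun _ => (1 : ℝ≥0∞)) (p.1 * Real.cos p.2, p.1 * Real.sin p.2) := by
        apply lintegral_congr; intro p; rw [hm]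
    _ = ∫⁻ s in Ioi (0:ℝ), ∫⁻ θ in Ioo (-π) π,
        ENNReal.ofReal s * S.indicator (fun _ => (1 : ℝ≥0∞)) (s * Real.cos θ, s * Real.sin θ) := by
        rw [hrw, lintegral_prod _ hmeas.aemeasurable]
    _ = ∫⁻ s in Ioi (0:ℝ), (Iic t).indicator
          (fun s => ENNReal.ofReal (2 * s * Real.arccos ((s ^ 2 + v₀ ^ 2 - r ^ 2) / (2 * v₀ * s)))) s := by
        apply setLIntegral_congr_fun measurableSet_Ioi (?_)
        intro s hs
        dsimp only
        have hs0 : 0 < s := hs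
        have hcond : ∀ θ : ℝ, ((s * Real.cos θ, s * Real.sin θ) ∈ S) ↔
            (s ≤ t ∧ Real.cos θ ≤ (r ^ 2 - v₀ ^ 2 - s ^ 2) / (2 * v₀ * s)) := by
          intro θ
          have hcs : (s * Real.cos θ) ^ 2 + (s * Real.sin θ) ^ 2 = s ^ 2 := by
            have := Real.sin_sq_add_cos_sq θ; nlinarith [this]
          simp only [hS_def, Set.mem_setOf_eq]
          constructor
          · rintro ⟨h1, h2⟩
            constructor
            · nlinarith [hcs, h1]
            · rw [le_div_iff₀ (by positivity)]
              nlinarith [hcs, h2]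
          · rintro ⟨h1, h2⟩
            rw [le_div_iff₀ (by positivity)] at h2
            constructor
            · nlinarith [hcs, h1]
            · nlinarith [hcs, h2]
        rcases le_or_gt s t with hst | hst
        · rw [Set.indicator_of_mem (by exact hst : s ∈ Iic t)]
          have : ∀ θ ∈ Ioo (-π) π, ENNReal.ofReal s * S.indicator (fun _ => (1:ℝ≥0∞))
              (s * Real.cos θ, s * Real.sin θ) =
              ENNReal.ofReal s * ({θ : ℝ | θ ∈ Ioo (-π) π ∧
                Real.cos θ ≤ (r ^ 2 - v₀ ^ 2 - s ^ 2) / (2 * v₀ * s)}).indicator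
                (fun _ => (1:ℝ≥0∞)) θ := by
            intro θ hθ
            congr 1
            by_cases hin : (s * Real.cos θ, s * Real.sin θ) ∈ S
            · rw [Set.indicator_of_mem hin, Set.indicator_of_mem
                (show θ ∈ {θ : ℝ | θ ∈ Ioo (-π) π ∧
                    Real.cos θ ≤ (r ^ 2 - v₀ ^ 2 - s ^ 2) / (2 * v₀ * s)} from
                  ⟨hθ, ((hcond θ).mp hin).2⟩)]
            · rw [Set.indicator_of_notMem hin, Set.indicator_of_notMem (fun hmem =>
                hin ((hcond θ).mpr ⟨hst, hmem.2⟩))]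
          have hsetm : MeasurableSet {θ : ℝ | θ ∈ Ioo (-π) π ∧
              Real.cos θ ≤ (r ^ 2 - v₀ ^ 2 - s ^ 2) / (2 * v₀ * s)} :=
            measurableSet_Ioo.inter (measurableSet_le Real.measurable_cos measurable_const)
          rw [setLIntegral_congr_fun measurableSet_Ioo (this),
            lintegral_const_mul _ (Measurable.indicator measurable_const hsetm),
            lintegral_indicator hsetm, setLIntegral_one,
            Measure.restrict_apply hsetm]
          have hsub : {θ : ℝ | θ ∈ Ioo (-π) π ∧
              Real.cos θ ≤ (r ^ 2 - v₀ ^ 2 - s ^ 2) / (2 * v₀ * s)} ∩ Ioo (-π) π =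
              {θ : ℝ | θ ∈ Ioo (-π) π ∧
              Real.cos θ ≤ (r ^ 2 - v₀ ^ 2 - s ^ 2) / (2 * v₀ * s)} := by
            apply Set.inter_eq_self_of_subset_left
            exact fun θ hθ => hθ.1
          rw [hsub, arc_measure, ← ENNReal.ofReal_mul hs0.le]
          congr 1
          have harg : (s ^ 2 + v₀ ^ 2 - r ^ 2) / (2 * v₀ * s) =
              -((r ^ 2 - v₀ ^ 2 - s ^ 2) / (2 * v₀ * s)) := by ring
          rw [harg, Real.arccos_neg]
          ring
        · rw [Set.indicator_of_notMem (by exact fun h => absurd h (not_le.mpr hst) : s ∉ Iic t)]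
          have : ∀ θ ∈ Ioo (-π) π, ENNReal.ofReal s * S.indicator (fun _ => (1:ℝ≥0∞))
              (s * Real.cos θ, s * Real.sin θ) = 0 := by
            intro θ _
            rw [Set.indicator_of_notMem (fun hmem => absurd ((hcond θ).mp hmem).1 (not_le.mpr hst)),
              mul_zero]
          rw [setLIntegral_congr_fun measurableSet_Ioo (this), lintegral_zero]
    _ = ∫⁻ s in Ioc (0 : ℝ) t,
        ENNReal.ofReal (2 * s * Real.arccos ((s ^ 2 + v₀ ^ 2 - r ^ 2) / (2 * v₀ * s))) := by
        rw [lintegral_indicator measurableSet_Iic, Measure.restrict_restrict measurableSet_Iic]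
        congr 1
        rw [Set.inter_comm, Set.Ioi_inter_Iic]
/-- Distance distribution from a reference point at horizontal offset `v₀` (and height `0`)
to a point uniformly distributed on a disk of radius `r_d` elevated at height `h > 0`:
the distance `Z = √(‖X₂D − v₀‖² + h²)` (where `X₂D` is the uniform 2D projection) has density
`f_Z(z) = 2z/r_d²` on `[z_l, z_m]` and
`f_Z(z) = (2z/(π r_d²)) arccos((z² + v₀² − r_d² − h²)/(2 v₀ √(z² − h²)))` on `[z_m, z_p]`,
where `z_l = h`, `z_m = √((r_d − v₀)² + h²)`, `z_p = √((r_d + v₀)² + h²)`. -/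
theorem distance_density_uniform_disk (r_d v₀ h : ℝ) (hrd : 0 < r_d) (hh : 0 < h)
    (hv₀ : v₀ ∈ Icc 0 r_d)
    (z_l z_m z_p : ℝ)
    (hzl : z_l = h)
    (hzm : z_m = Real.sqrt ((r_d - v₀) ^ 2 + h ^ 2))
    (hzp : z_p = Real.sqrt ((r_d + v₀) ^ 2 + h ^ 2))
    (fZ : ℝ → ℝ)
    (hfZ : ∀ z, fZ z =
      if z_l ≤ z ∧ z ≤ z_m then 2 * z / r_d ^ 2
      else if z_m ≤ z ∧ z ≤ z_p then
        2 * z / (Real.pi * r_d ^ 2) *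
          Real.arccos ((z ^ 2 + v₀ ^ 2 - r_d ^ 2 - h ^ 2) /
            (2 * v₀ * Real.sqrt (z ^ 2 - h ^ 2)))
      else 0)
    (μ : Measure (EuclideanSpace ℝ (Fin 2)))
    (hμ : μ = (volume (Metric.closedBall (0 : EuclideanSpace ℝ (Fin 2)) r_d))⁻¹ •
      volume.restrict (Metric.closedBall (0 : EuclideanSpace ℝ (Fin 2)) r_d)) :
    Measure.map
        (fun p : EuclideanSpace ℝ (Fin 2) =>
          Real.sqrt (dist p (WithLp.toLp 2 (fun i : Fin 2 => if i = 0 then v₀ else 0)) ^ 2 + h ^ 2)) μ =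
      volume.withDensity (fun z => ENNReal.ofReal (fZ z)) := by
  obtain ⟨hv0, hvr⟩ := hv₀
  set B : Set (EuclideanSpace ℝ (Fin 2)) := Metric.closedBall 0 r_d with hB_def
  set v : EuclideanSpace ℝ (Fin 2) := (WithLp.toLp 2 (fun i : Fin 2 => if i = 0 then v₀ else 0)) with hv_def
  set g : EuclideanSpace ℝ (Fin 2) → ℝ := fun p => Real.sqrt (dist p v ^ 2 + h ^ 2) with hg_def
  have hgm : Measurable g := by
    apply Continuous.measurable
    apply Real.continuous_sqrt.comp
    exact ((continuous_id.dist continuous_const).pow 2).add continuous_const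
  have hBvol : volume B = ENNReal.ofReal (π * r_d ^ 2) := disk_vol 0 r_d hrd.le
  have hπr : (0:ℝ) < π * r_d ^ 2 := by positivity
  have hBne : volume B ≠ 0 := by rw [hBvol]; exact (ENNReal.ofReal_pos.mpr hπr).ne'
  have hBnt : volume B ≠ ⊤ := by rw [hBvol]; exact ENNReal.ofReal_ne_top
  have hcnt : (volume B)⁻¹ ≠ ⊤ := ENNReal.inv_ne_top.mpr hBne
  -- basic facts
  have hzm_h : h ≤ z_m := by
    rw [hzm]
    calc h = Real.sqrt (h ^ 2) := (Real.sqrt_sq hh.le).symm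
      _ ≤ _ := Real.sqrt_le_sqrt (by nlinarith)
  have hzp_h : h ≤ z_p := by
    rw [hzp]
    calc h = Real.sqrt (h ^ 2) := (Real.sqrt_sq hh.le).symm
      _ ≤ _ := Real.sqrt_le_sqrt (by nlinarith)
  have hzmp : z_m ≤ z_p := by
    rw [hzm, hzp]; apply Real.sqrt_le_sqrt; nlinarith
  have hzp2 : z_p ^ 2 = (r_d + v₀) ^ 2 + h ^ 2 := by
    rw [hzp, Real.sq_sqrt (by positivity)]
  have hzm2 : z_m ^ 2 = (r_d - v₀) ^ 2 + h ^ 2 := by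
    rw [hzm, Real.sq_sqrt (by positivity)]
  have key : ∀ a : ℝ,
      (Measure.map g μ) (Iic a) =
        (volume.withDensity fun z => ENNReal.ofReal (fZ z)) (Iic a) := by
    intro a
    rw [Measure.map_apply hgm measurableSet_Iic, withDensity_apply _ measurableSet_Iic,
      hμ, Measure.coe_smul, Pi.smul_apply, smul_eq_mul,
      Measure.restrict_apply (hgm measurableSet_Iic)]
    rcases lt_or_ge a h with hah | hah
    · -- a < h : both sides zero
      have hpre : g ⁻¹' Iic a = ∅ := by
        ext p
        simp only [Set.mem_preimage, Set.mem_Iic, Set.mem_empty_iff_false, iff_false, not_le]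
        calc a < h := hah
          _ = Real.sqrt (h ^ 2) := (Real.sqrt_sq hh.le).symm
          _ ≤ g p := Real.sqrt_le_sqrt (by nlinarith [dist_nonneg (x := p) (y := v)])
      rw [hpre, Set.empty_inter, measure_empty, mul_zero]
      symm
      rw [setLIntegral_congr_fun measurableSet_Iic
        ((fun z (hz : z ≤ a) => ?_)), lintegral_zero]
      rw [hfZ]
      rw [if_neg (by rw [hzl]; intro hc; linarith [hc.1]), if_neg (by intro hc; linarith [hc.1])]
      simp
    · -- a ≥ h
      have ha0 : 0 ≤ a := hh.le.trans hah
      set t : ℝ := Real.sqrt (a ^ 2 - h ^ 2) with ht_def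
      set a' : ℝ := min a z_p with ha'_def
      set t' : ℝ := Real.sqrt (a' ^ 2 - h ^ 2) with ht'_def
      have hha' : h ≤ a' := le_min hah hzp_h
      have ha'0 : 0 ≤ a' := hh.le.trans hha'
      have ha'a : a' ≤ a := min_le_left _ _
      have ha'zp : a' ≤ z_p := min_le_right _ _
      have ht'2 : t' ^ 2 = a' ^ 2 - h ^ 2 := Real.sq_sqrt (by nlinarith)
      have ht'a' : Real.sqrt (t' ^ 2 + h ^ 2) = a' := by
        rw [ht'2, sub_add_cancel, Real.sqrt_sq ha'0]
      have hpre : g ⁻¹' Iic a = Metric.closedBall v t := by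
        ext p
        simp only [Set.mem_preimage, Set.mem_Iic, Metric.mem_closedBall]
        rw [hg_def]
        constructor
        · intro hp
          rw [Real.sqrt_le_iff] at hp
          rw [ht_def, ← Real.sqrt_sq (dist_nonneg (x := p) (y := v))]
          apply Real.sqrt_le_sqrt
          nlinarith [hp.2]
        · intro hp
          rw [Real.sqrt_le_iff]
          refine ⟨ha0, ?_⟩
          have : dist p v ^ 2 ≤ t ^ 2 := by
            apply pow_le_pow_left₀ (dist_nonneg) hp
          have ht2 : t ^ 2 = a ^ 2 - h ^ 2 := Real.sq_sqrt (by nlinarith)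
          nlinarith
      rw [hpre, Set.inter_comm]
      -- reduce RHS to Ioc h a'
      have hred : ∫⁻ z in Iic a, ENNReal.ofReal (fZ z) =
          ∫⁻ z in Ioc h a', ENNReal.ofReal (fZ z) := by
        have h1 : (Iic a : Set ℝ) =ᵐ[volume] (Iio h ∪ Ioc h a : Set ℝ) := by
          rw [← Set.Iic_union_Ioc_eq_Iic hah]
          exact (Iio_ae_eq_Iic (a := h)).symm.union (Filter.EventuallyEq.refl _ _)
        rw [setLIntegral_congr h1,
          show (Ioc h a : Set ℝ) = Ioc h a' ∪ Ioc a' a from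
            (Set.Ioc_union_Ioc_eq_Ioc hha' ha'a).symm,
          lintegral_union (measurableSet_Ioc.union measurableSet_Ioc)
            (by
              rw [Set.disjoint_left]
              rintro x (hx : x < h) (hx' | hx')
              · exact absurd hx'.1 (not_lt.mpr hx.le)
              · exact absurd (hha'.trans hx'.1.le) (not_le.mpr hx)),
          lintegral_union measurableSet_Ioc (Set.Ioc_disjoint_Ioc_of_le le_rfl)]
        have hIio : ∫⁻ z in Iio h, ENNReal.ofReal (fZ z) = 0 := by
          rw [setLIntegral_congr_fun measurableSet_Iio
            ((fun z (hz : z < h) => ?_)), lintegral_zero]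
          rw [hfZ, if_neg (by rw [hzl]; intro hc; linarith [hc.1]),
            if_neg (by intro hc; linarith [hc.1])]
          simp
        have hIoc2 : ∫⁻ z in Ioc a' a, ENNReal.ofReal (fZ z) = 0 := by
          rcases le_or_gt a z_p with hazp | hazp
          · rw [show a' = a from min_eq_left hazp]
            simp
          · rw [show a' = z_p from min_eq_right hazp.le]
            rw [setLIntegral_congr_fun measurableSet_Ioc
              ((fun z hz => ?_)), lintegral_zero]
            have hz1 : z_p < z := hz.1
            rw [hfZ, if_neg (by intro hc; linarith [hc.2, hzmp]),
              if_neg (by intro hc; linarith [hc.2])]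
            simp
        rw [hIio, hIoc2, zero_add, add_zero]
      rw [hred]
      -- substitution
      rw [← ht'a', subst_sqrt h t' hh (Real.sqrt_nonneg _) (fun z => ENNReal.ofReal (fZ z))]
      rcases eq_or_lt_of_le hv0 with hv0' | hv0'
      · -- v₀ = 0
        have hveq : v = 0 := by
          rw [hv_def]; ext i; simp [← hv0']
        have hBint : B ∩ Metric.closedBall (0 : EuclideanSpace ℝ (Fin 2)) t =
            Metric.closedBall 0 (min r_d t) := by
          rw [hB_def]; ext p
          simp only [Set.mem_inter_iff, Metric.mem_closedBall, le_min_iff]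
        rw [hveq, hBint, disk_vol _ _ (le_min hrd.le (Real.sqrt_nonneg _))]
        have hmp : z_m = z_p := by rw [hzm, hzp, ← hv0']; ring_nf
        have hpt : ∫⁻ s in Ioc (0:ℝ) t',
            ENNReal.ofReal (s / Real.sqrt (s ^ 2 + h ^ 2)) *
              ENNReal.ofReal (fZ (Real.sqrt (s ^ 2 + h ^ 2))) =
            ∫⁻ s in Ioc (0:ℝ) t', ENNReal.ofReal (2 / r_d ^ 2 * s) := by
          apply setLIntegral_congr_fun measurableSet_Ioc ((fun s hs => ?_))
          set z : ℝ := Real.sqrt (s ^ 2 + h ^ 2) with hz_def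
          have hs0 : 0 < s := hs.1
          have hhz : h < z := by
            rw [hz_def]
            calc h = Real.sqrt (h ^ 2) := (Real.sqrt_sq hh.le).symm
              _ < _ := Real.sqrt_lt_sqrt (by positivity) (by nlinarith)
          have hz0 : 0 < z := hh.trans hhz
          have hza' : z ≤ a' := by
            rw [← ht'a', hz_def]
            apply Real.sqrt_le_sqrt
            nlinarith [hs.2, Real.sqrt_nonneg (a' ^ 2 - h ^ 2), hs.1]
          rw [hfZ, if_pos ⟨hzl ▸ hhz.le, hza'.trans (hmp ▸ ha'zp)⟩,
            ← ENNReal.ofReal_mul (div_nonneg hs0.le hz0.le)]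
          congr 1
          field_simp
        rw [hpt]
        have hcomp : ∫⁻ s in Ioc (0:ℝ) t', ENNReal.ofReal (2 / r_d ^ 2 * s) =
            ENNReal.ofReal ((a' ^ 2 - h ^ 2) / r_d ^ 2) := by
          rw [← MeasureTheory.ofReal_integral_eq_lintegral_ofReal]
          · congr 1
            rw [← intervalIntegral.integral_of_le (Real.sqrt_nonneg _),
              intervalIntegral.integral_const_mul, integral_id, ht'2]
            ring
          · exact (continuous_const.mul continuous_id).integrableOn_Ioc
          · exact (ae_restrict_iff' measurableSet_Ioc).mpr
              (ae_of_all _ fun s hs => mul_nonneg (by positivity) hs.1.le)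
        rw [hcomp, hBvol]
        have hmin2 : min r_d t ^ 2 = a' ^ 2 - h ^ 2 := by
          rw [← hv0'] at hzp2
          rcases le_or_gt a z_p with hazp | hazp
          · have haa : a' = a := by rw [ha'_def, min_eq_left hazp]
            have ht2 : t ^ 2 = a ^ 2 - h ^ 2 := Real.sq_sqrt (by nlinarith)
            have htr : t ≤ r_d := by
              rw [ht_def, show r_d = Real.sqrt (r_d ^ 2) from (Real.sqrt_sq hrd.le).symm]
              apply Real.sqrt_le_sqrt
              nlinarith [hzp2, hazp, ha0]
            rw [min_eq_right htr, ht2, haa]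
          · have haa : a' = z_p := by rw [ha'_def, min_eq_right hazp.le]
            have htr : r_d ≤ t := by
              rw [ht_def, show r_d = Real.sqrt (r_d ^ 2) from (Real.sqrt_sq hrd.le).symm]
              apply Real.sqrt_le_sqrt
              nlinarith [hzp2, hazp.le, hh.le.trans hzp_h]
            rw [min_eq_left htr, haa]
            nlinarith
        rw [hmin2, mul_comm, ← div_eq_mul_inv, ← ENNReal.ofReal_div_of_pos hπr]
        congr 1
        field_simp
      · -- v₀ > 0
        rw [hv_def, ball_inter_vol r_d v₀ t (Real.sqrt_nonneg _) hrd.le,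
          lens_vol r_d v₀ t hv0' (Real.sqrt_nonneg _)]
        -- L(t) = L(t')
        have hLL : ∫⁻ s in Ioc (0:ℝ) t,
            ENNReal.ofReal (2 * s * Real.arccos ((s ^ 2 + v₀ ^ 2 - r_d ^ 2) / (2 * v₀ * s))) =
            ∫⁻ s in Ioc (0:ℝ) t',
            ENNReal.ofReal (2 * s * Real.arccos ((s ^ 2 + v₀ ^ 2 - r_d ^ 2) / (2 * v₀ * s))) := by
          rcases le_or_gt a z_p with hazp | hazp
          · rw [show t' = t by rw [ht'_def, ht_def, ha'_def, min_eq_left hazp]]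
          · have ha'zp' : a' = z_p := min_eq_right hazp.le
            have ht'r : t' = r_d + v₀ := by
              rw [ht'_def, ha'zp', show z_p ^ 2 - h ^ 2 = (r_d + v₀) ^ 2 by rw [hzp2]; ring,
                Real.sqrt_sq (by positivity)]
            have ht't : t' ≤ t := by
              rw [ht'_def, ht_def]
              apply Real.sqrt_le_sqrt
              have : a' ≤ a := ha'a
              nlinarith [ha'0]
            rw [show Ioc (0:ℝ) t = Ioc 0 t' ∪ Ioc t' t from
                (Set.Ioc_union_Ioc_eq_Ioc (Real.sqrt_nonneg _) ht't).symm,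
              lintegral_union measurableSet_Ioc (Set.Ioc_disjoint_Ioc_of_le le_rfl)]
            have hzero : ∫⁻ s in Ioc t' t,
                ENNReal.ofReal (2 * s * Real.arccos ((s ^ 2 + v₀ ^ 2 - r_d ^ 2) / (2 * v₀ * s))) = 0 := by
              rw [setLIntegral_congr_fun measurableSet_Ioc
                ((fun s hs => ?_)), lintegral_zero]
              have hs1 : r_d + v₀ < s := ht'r ▸ hs.1
              have hs0 : 0 < s := lt_trans (by positivity) hs1
              have harc : Real.arccos ((s ^ 2 + v₀ ^ 2 - r_d ^ 2) / (2 * v₀ * s)) = 0 := by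
                apply Real.arccos_eq_zero.mpr
                rw [le_div_iff₀ (by positivity)]
                nlinarith
              rw [harc, mul_zero, ENNReal.ofReal_zero]
            rw [hzero, add_zero]
        rw [hLL]
        -- pointwise identity
        have hpt : ∫⁻ s in Ioc (0:ℝ) t',
            ENNReal.ofReal (s / Real.sqrt (s ^ 2 + h ^ 2)) *
              ENNReal.ofReal (fZ (Real.sqrt (s ^ 2 + h ^ 2))) =
            ∫⁻ s in Ioc (0:ℝ) t',
            ENNReal.ofReal (2 * s * Real.arccos ((s ^ 2 + v₀ ^ 2 - r_d ^ 2) / (2 * v₀ * s))) *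
              (ENNReal.ofReal (π * r_d ^ 2))⁻¹ := by
          apply setLIntegral_congr_fun measurableSet_Ioc ((fun s hs => ?_))
          set z : ℝ := Real.sqrt (s ^ 2 + h ^ 2) with hz_def
          have hs0 : 0 < s := hs.1
          have hz2 : z ^ 2 = s ^ 2 + h ^ 2 := Real.sq_sqrt (by positivity)
          have hhz : h < z := by
            rw [hz_def]
            calc h = Real.sqrt (h ^ 2) := (Real.sqrt_sq hh.le).symm
              _ < _ := Real.sqrt_lt_sqrt (by positivity) (by nlinarith)
          have hz0 : 0 < z := hh.trans hhz
          have hza' : z ≤ a' := by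
            rw [← ht'a', hz_def]
            apply Real.sqrt_le_sqrt
            nlinarith [hs.2, Real.sqrt_nonneg (a' ^ 2 - h ^ 2), hs.1]
          have hsz : Real.sqrt (z ^ 2 - h ^ 2) = s := by
            rw [hz2, show s ^ 2 + h ^ 2 - h ^ 2 = s ^ 2 by ring, Real.sqrt_sq hs0.le]
          rw [hfZ]
          rcases le_or_gt s (r_d - v₀) with hsm | hsm
          · -- first branch
            have hzzm : z ≤ z_m := by
              rw [hzm, hz_def]
              apply Real.sqrt_le_sqrt
              nlinarith
            rw [if_pos ⟨hzl ▸ hhz.le, hzzm⟩]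
            have harc : Real.arccos ((s ^ 2 + v₀ ^ 2 - r_d ^ 2) / (2 * v₀ * s)) = π := by
              apply Real.arccos_eq_pi.mpr
              rw [div_le_iff₀ (by positivity)]
              nlinarith
            rw [harc, ← ENNReal.ofReal_mul (div_nonneg hs0.le hz0.le), ← div_eq_mul_inv,
              ← ENNReal.ofReal_div_of_pos hπr]
            congr 1
            field_simp
          · -- second branch v2
            have hzmz : z_m < z := by
              rw [hzm, hz_def]
              apply Real.sqrt_lt_sqrt (by positivity)
              nlinarith
            rw [if_neg (fun hc => absurd hc.2 (not_le.mpr hzmz)),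
              if_pos ⟨hzmz.le, hza'.trans ha'zp⟩, hsz,
              show z ^ 2 + v₀ ^ 2 - r_d ^ 2 - h ^ 2 = s ^ 2 + v₀ ^ 2 - r_d ^ 2 by rw [hz2]; ring,
              ← ENNReal.ofReal_mul (div_nonneg hs0.le hz0.le), ← div_eq_mul_inv,
              ← ENNReal.ofReal_div_of_pos hπr]
            congr 1
            field_simp
        rw [hpt, lintegral_mul_const' _ _ (ENNReal.inv_ne_top.mpr
          (ENNReal.ofReal_pos.mpr hπr).ne'), hBvol, mul_comm]
  have hprob : IsProbabilityMeasure (Measure.map g μ) := by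
    have : IsProbabilityMeasure μ := by
      constructor
      rw [hμ, Measure.coe_smul, Pi.smul_apply, smul_eq_mul, Measure.restrict_apply_univ]
      exact ENNReal.inv_mul_cancel hBne hBnt
    exact Measure.isProbabilityMeasure_map hgm.aemeasurable
  have hfin : IsFiniteMeasure (volume.withDensity fun z => ENNReal.ofReal (fZ z)) := by
    constructor
    have huniv : (univ : Set ℝ) = ⋃ n : ℕ, Iic (n : ℝ) := by
      ext x
      simp only [Set.mem_univ, Set.mem_iUnion, Set.mem_Iic, true_iff]
      exact exists_nat_ge x
    rw [huniv]
    have hmono : Monotone (fun n : ℕ => Iic ((n : ℝ))) := fun m n hmn =>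
      Iic_subset_Iic.mpr (by exact_mod_cast hmn)
    rw [hmono.directed_le.measure_iUnion]
    exact lt_of_le_of_lt (iSup_le fun n => by rw [← key]; exact prob_le_one)
      ENNReal.one_lt_top
  exact Measure.ext_of_Iic _ _ key
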